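/- Let α ≥ π/2 and let x ∈ 𝒳 be a slowly oscillating periodic solution of Wright's equation x'(t) = -α(e^{x(t-1)} - 1), with q = q(x) and q̄ = q̄(x). Define a_1(α) = -(α - 1) and a_{i+1}(α) = α(e^{a_i(α)} - 1). Then for every i ≥ 1: 1 + (1/α)·(α + e^{-α} - 1)/(exp(α + e^{-α} - 1) - 1) < q < 2 + 1/α, and 1 + 1/α < q̄ < max{3, 2 + |(e^α - 1)/(e^{a_i(α)} - 1)|}. Additionally, if α ≥ 2 then q < 2. -/

import Mathlib

open Real Set Filter

noncomputable section

/-- `x` solves Wright's equation `x'(t) = -α (e^{x(t-1)} - 1)` on all of `ℝ`. -/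
def WrightSol (α : ℝ) (x : ℝ → ℝ) : Prop :=
  ∀ t : ℝ, HasDerivAt x (-α * (Real.exp (x (t - 1)) - 1)) t

/-- The space 𝒳: C¹ functions with `x 0 = 0`, `x' 0 > 0` and `x < 0` on `(-1,0)`. -/
def InX (x : ℝ → ℝ) : Prop :=
  ContDiff ℝ 1 x ∧ x 0 = 0 ∧ 0 < deriv x 0 ∧ ∀ t ∈ Set.Ioo (-1 : ℝ) 0, x t < 0

/-- A slowly oscillating periodic solution in 𝒳, with first zero `q` and data `qbar`:
positive on `(0,q)`, negative on `(q, q+qbar)`, periodic with minimal period `q+qbar`. -/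
def SOPSX (α q qbar : ℝ) (x : ℝ → ℝ) : Prop :=
  InX x ∧ WrightSol α x ∧ 1 < q ∧ 1 < qbar ∧
  (∀ t ∈ Set.Ioo 0 q, 0 < x t) ∧
  (∀ t ∈ Set.Ioo q (q + qbar), x t < 0) ∧
  Function.Periodic x (q + qbar) ∧
  (∀ T : ℝ, 0 < T → Function.Periodic x T → q + qbar ≤ T)

/-- A slowly oscillating periodic solution (up to time translation). -/
def SOPS (α : ℝ) (x : ℝ → ℝ) : Prop :=
  WrightSol α x ∧
  ∃ q qbar : ℝ, 1 < q ∧ 1 < qbar ∧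
    (∃ τ : ℝ, (∀ t ∈ Set.Ioo 0 q, 0 < x (t + τ)) ∧
      (∀ t ∈ Set.Ioo q (q + qbar), x (t + τ) < 0)) ∧
    Function.Periodic x (q + qbar) ∧
    (∀ T : ℝ, 0 < T → Function.Periodic x T → q + qbar ≤ T)

/-- Jones' iterative lower-bound constants: `aJones α i` corresponds to `a_{i+1}` in the
paper, so `aJones α 0 = a_1 = -(α - 1)` and `aJones α (i+1) = α (e^{aJones α i} - 1)`. -/
noncomputable def aJones (α : ℝ) : ℕ → ℝ
  | 0 => -(α - 1)
  | (i + 1) => α * (Real.exp (aJones α i) - 1)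


open Topology

structure WCore (α q qbar : ℝ) (x : ℝ → ℝ) : Prop where
  hα : 1 < α
  hW : WrightSol α x
  hq : 1 < q
  hqb : 1 < qbar
  hx0 : x 0 = 0
  hpos : ∀ t ∈ Set.Ioo 0 q, 0 < x t
  hneg : ∀ t ∈ Set.Ioo q (q + qbar), x t < 0
  hper : Function.Periodic x (q + qbar)

lemma exp_ratio {M N : ℝ} (h0 : 0 < M) (hMN : M < N) :
    N * (Real.exp M - 1) < M * (Real.exp N - 1) := by
  have h1 : Real.exp M * (1 - M) < 1 := by
    have := Real.add_one_lt_exp (show -M ≠ 0 by intro hc; apply absurd (neg_eq_zero.mp hc) (ne_of_gt h0))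
    rw [Real.exp_neg] at this
    have hE := Real.exp_pos M
    rw [show -M + 1 = 1 - M by ring] at this
    calc Real.exp M * (1 - M) < Real.exp M * (Real.exp M)⁻¹ := by
          apply mul_lt_mul_of_pos_left this hE
      _ = 1 := mul_inv_cancel₀ (ne_of_gt hE)
  have h2 : Real.exp M * (N - M) ≤ Real.exp N - Real.exp M := by
    have := Real.add_one_le_exp (N - M)
    have hE := Real.exp_pos M
    have h3 : Real.exp M * (N - M + 1) ≤ Real.exp M * Real.exp (N - M) :=
      mul_le_mul_of_nonneg_left this (le_of_lt hE)
    rw [← Real.exp_add] at h3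
    rw [show M + (N - M) = N by ring] at h3
    nlinarith
  nlinarith [mul_pos (sub_pos.mpr hMN) (by nlinarith : (0:ℝ) < 1 - Real.exp M * (1 - M)),
    mul_nonneg (le_of_lt h0) (by nlinarith : (0:ℝ) ≤ Real.exp N - Real.exp M - Real.exp M * (N - M))]

lemma aJones_neg {α : ℝ} (hα : 1 < α) : ∀ i, aJones α i < 0 := by
  intro i
  induction i with
  | zero => simp [aJones]; linarith
  | succ n ih =>
    have : Real.exp (aJones α n) < 1 := Real.exp_lt_one_iff.mpr ih
    simp only [aJones]
    nlinarith

namespace WCore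

variable {α q qbar : ℝ} {x : ℝ → ℝ} (h : WCore α q qbar x)
include h

lemma hα0 : (0:ℝ) < α := lt_trans one_pos h.hα

lemma diff : Differentiable ℝ x := fun t => (h.hW t).differentiableAt

lemma cont : Continuous x := h.diff.continuous

lemma contG : Continuous (fun s => α * (1 - Real.exp (x s))) :=
  continuous_const.mul (continuous_const.sub (Real.continuous_exp.comp h.cont))

lemma deriv_eq (t : ℝ) : deriv x t = α * (1 - Real.exp (x (t - 1))) := by
  have := (h.hW t).deriv
  rw [this]; ring

lemma ftc (a b : ℝ) :
    x b - x a = ∫ s in (a-1)..(b-1), α * (1 - Real.exp (x s)) := by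
  have h2 : (∫ t in a..b, -α * (Real.exp (x (t - 1)) - 1)) = x b - x a :=
    intervalIntegral.integral_eq_sub_of_hasDerivAt (fun t _ => h.hW t)
      (Continuous.intervalIntegrable
        ((continuous_const.mul
          ((Real.continuous_exp.comp (h.cont.comp (continuous_id.sub continuous_const))).sub
            continuous_const))) a b)
  rw [← h2]
  have h3 : (fun t => -α * (Real.exp (x (t - 1)) - 1))
      = fun t => (fun s => α * (1 - Real.exp (x s))) (t - 1) := by
    funext t; ring
  rw [h3, intervalIntegral.integral_comp_sub_right (fun s => α * (1 - Real.exp (x s))) 1]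

lemma neg' {t : ℝ} (h1 : -qbar < t) (h2 : t < 0) : x t < 0 := by
  have := h.hper t
  have h3 : x (t + (q + qbar)) < 0 := h.hneg _ ⟨by linarith, by linarith⟩
  linarith [this ▸ h3]

lemma xq : x q = 0 := by
  have hub : x q ≤ 0 := by
    have ht : Tendsto x (𝓝[>] q) (𝓝 (x q)) :=
      (h.cont.continuousAt).continuousWithinAt.tendsto
    refine le_of_tendsto ht ?_
    filter_upwards [Ioo_mem_nhdsGT_of_mem (⟨le_refl q, by linarith [h.hqb]⟩ : q ∈ Ico q (q+qbar))]
      with t ht2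
    exact le_of_lt (h.hneg t ht2)
  have hlb : 0 ≤ x q := by
    have ht : Tendsto x (𝓝[<] q) (𝓝 (x q)) :=
      (h.cont.continuousAt).continuousWithinAt.tendsto
    refine ge_of_tendsto ht ?_
    filter_upwards [Ioo_mem_nhdsLT_of_mem (⟨by linarith [h.hq], le_refl q⟩ : q ∈ Ioc 0 q)]
      with t ht2
    exact le_of_lt (h.hpos t ht2)
  linarith

lemma xL : x (q + qbar) = 0 := by
  have := h.hper 0
  rw [zero_add] at this
  rw [this, h.hx0]

lemma monoOn {a b : ℝ} (hs : ∀ t ∈ Ioo a b, x (t-1) ≤ 0) : MonotoneOn x (Icc a b) := by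
  apply monotoneOn_of_deriv_nonneg (convex_Icc a b) h.cont.continuousOn
    (fun t _ => (h.diff t).differentiableWithinAt)
  intro t ht
  rw [interior_Icc] at ht
  rw [h.deriv_eq t]
  have : Real.exp (x (t-1)) ≤ 1 := Real.exp_le_one_iff.mpr (hs t ht)
  have := h.hα0
  nlinarith

lemma antiOn {a b : ℝ} (hs : ∀ t ∈ Ioo a b, 0 ≤ x (t-1)) : AntitoneOn x (Icc a b) := by
  apply antitoneOn_of_deriv_nonpos (convex_Icc a b) h.cont.continuousOn
    (fun t _ => (h.diff t).differentiableWithinAt)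
  intro t ht
  rw [interior_Icc] at ht
  rw [h.deriv_eq t]
  have : 1 ≤ Real.exp (x (t-1)) := Real.one_le_exp_iff.mpr (hs t ht)
  have := h.hα0
  nlinarith

lemma up : MonotoneOn x (Icc 0 1) := by
  apply h.monoOn
  intro t ht
  exact le_of_lt (h.neg' (by linarith [ht.1, h.hqb]) (by linarith [ht.2]))

lemma down : AntitoneOn x (Icc 1 (q+1)) := by
  apply h.antiOn
  intro t ht
  exact le_of_lt (h.hpos _ ⟨by linarith [ht.1], by linarith [ht.2]⟩)

lemma up2 : MonotoneOn x (Icc (q+1) (q+qbar)) := by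
  apply h.monoOn
  intro t ht
  exact le_of_lt (h.hneg _ ⟨by linarith [ht.1], by linarith [ht.2, h.hqb]⟩)

lemma xmax : ∀ s ∈ Icc (0:ℝ) q, x s ≤ x 1 := by
  intro s hs
  rcases le_total s 1 with h1 | h1
  · exact h.up ⟨hs.1, h1⟩ ⟨by linarith [h.hq], le_refl 1⟩ h1
  · exact h.down ⟨le_refl 1, by linarith [h.hq]⟩ ⟨h1, by linarith [hs.2]⟩ h1

lemma xmin : ∀ s ∈ Icc q (q+qbar), x (q+1) ≤ x s := by
  intro s hs
  rcases le_total s (q+1) with h1 | h1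
  · exact h.down ⟨by linarith [h.hq, hs.1], h1⟩ ⟨by linarith [h.hq], le_refl _⟩ h1
  · exact h.up2 ⟨le_refl _, by linarith [h.hqb]⟩ ⟨h1, hs.2⟩ h1

lemma M_pos : 0 < x 1 := h.hpos 1 ⟨one_pos, h.hq⟩

lemma m_neg : x (q+1) < 0 := h.hneg _ ⟨by linarith, by linarith [h.hqb]⟩

lemma c_neg : x (q + qbar - 1) < 0 := h.hneg _ ⟨by linarith [h.hqb], by linarith⟩


lemma diff_le_int {a b : ℝ} (g : ℝ → ℝ) (hg : Continuous g) (hab : a ≤ b)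
    (hle : ∀ s ∈ Icc (a-1) (b-1), α * (1 - Real.exp (x s)) ≤ g s) :
    x b - x a ≤ ∫ s in (a-1)..(b-1), g s := by
  rw [h.ftc a b]
  exact intervalIntegral.integral_mono_on (by linarith)
    (h.contG.intervalIntegrable _ _) (hg.intervalIntegrable _ _) hle

lemma diff_ge_int {a b : ℝ} (g : ℝ → ℝ) (hg : Continuous g) (hab : a ≤ b)
    (hle : ∀ s ∈ Icc (a-1) (b-1), g s ≤ α * (1 - Real.exp (x s))) :
    (∫ s in (a-1)..(b-1), g s) ≤ x b - x a := by
  rw [h.ftc a b]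
  exact intervalIntegral.integral_mono_on (by linarith)
    (hg.intervalIntegrable _ _) (h.contG.intervalIntegrable _ _) hle

lemma diff_lt_int {a b : ℝ} (g : ℝ → ℝ) (hg : Continuous g) (hab : a < b)
    (hlt : ∀ s ∈ Ioc (a-1) (b-1), α * (1 - Real.exp (x s)) < g s) :
    x b - x a < ∫ s in (a-1)..(b-1), g s := by
  rw [h.ftc a b]
  have hab1 : a - 1 < b - 1 := by linarith
  refine intervalIntegral.integral_lt_integral_of_continuousOn_of_le_of_exists_lt hab1
    h.contG.continuousOn hg.continuousOn (fun s hs => le_of_lt (hlt s hs)) ?_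
  exact ⟨b-1, ⟨by linarith, le_refl _⟩, hlt (b-1) ⟨hab1, le_refl _⟩⟩

lemma diff_gt_int {a b : ℝ} (g : ℝ → ℝ) (hg : Continuous g) (hab : a < b)
    (hlt : ∀ s ∈ Ioc (a-1) (b-1), g s < α * (1 - Real.exp (x s))) :
    (∫ s in (a-1)..(b-1), g s) < x b - x a := by
  rw [h.ftc a b]
  have hab1 : a - 1 < b - 1 := by linarith
  refine intervalIntegral.integral_lt_integral_of_continuousOn_of_le_of_exists_lt hab1
    hg.continuousOn h.contG.continuousOn (fun s hs => le_of_lt (hlt s hs)) ?_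
  exact ⟨b-1, ⟨by linarith, le_refl _⟩, hlt (b-1) ⟨hab1, le_refl _⟩⟩

/-- Part C : qbar > 1 + 1/α -/
lemma qbar_gt : 1 + 1/α < qbar := by
  have hm : x (q+1) < 0 := h.m_neg
  have key : x (q+qbar) - x (q+1)
      < (∫ s in (q+1-1)..(q+qbar-1), (fun _ => α * (-(x (q+1)))) s) := by
    apply h.diff_lt_int _ (continuous_const) (by linarith [h.hqb])
    intro s hs
    have hs1 : q + 1 - 1 = q := by ring
    rw [hs1] at hs
    have hxs : x s < 0 := h.hneg s ⟨hs.1, by linarith [hs.2]⟩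
    have hxm : x (q+1) ≤ x s := h.xmin s ⟨le_of_lt hs.1, by linarith [hs.2]⟩
    have he : x s + 1 < Real.exp (x s) := Real.add_one_lt_exp (ne_of_lt hxs)
    have := h.hα0
    nlinarith
  rw [intervalIntegral.integral_const, h.xL] at key
  simp only [smul_eq_mul] at key
  have hq1 : (q + qbar - 1 - (q + 1 - 1)) = qbar - 1 := by ring
  rw [hq1] at key
  have hmp : 0 < -(x (q+1)) := by linarith
  have h2 : 1 < α * (qbar - 1) := by nlinarith [key, hmp]
  have h3 : 1/α < qbar - 1 := by
    rw [div_lt_iff₀ h.hα0]; nlinarith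
  linarith

/-- q < 3 -/
lemma q_lt_three : q < 3 := by
  by_contra hcon
  push_neg at hcon
  have hc : 0 < x (q-1) := h.hpos _ ⟨by linarith, by linarith⟩
  have key : x q - x (q-1)
      ≤ ∫ s in (q-1-1)..(q-1), (fun _ => α * (1 - Real.exp (x (q-1)))) s := by
    apply h.diff_le_int _ continuous_const (by linarith)
    intro s hs
    have hxs : x (q-1) ≤ x s :=
      h.down ⟨by linarith [hs.1], by linarith [hs.2]⟩ ⟨by linarith, by linarith⟩ hs.2
    have := Real.exp_le_exp.mpr hxs
    nlinarith [h.hα0]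
  rw [intervalIntegral.integral_const, h.xq] at key
  simp only [smul_eq_mul] at key
  have hlen : (q - 1 - (q-1-1)) = 1 := by ring
  rw [hlen, one_mul] at key
  have he : x (q-1) + 1 < Real.exp (x (q-1)) := Real.add_one_lt_exp (ne_of_gt hc)
  nlinarith [h.hα]

/-- Part A : q < 2 + 1/α -/
lemma q_lt : q < 2 + 1/α := by
  have h0 := h.hα0
  rcases le_or_gt q 2 with h2 | h2
  · have : 0 < 1/α := by positivity
    linarith
  have h3 := h.q_lt_three
  have hx2 : 0 < x 2 := h.hpos 2 ⟨by norm_num, h2⟩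
  have hc : 0 < x (q-1) := h.hpos _ ⟨by linarith, by linarith⟩
  have hcomp : x 2 ≤ x (q-1) :=
    h.down ⟨by linarith, by linarith⟩ ⟨by linarith, by linarith⟩ (by linarith)
  have key : x q - x 2
      ≤ ∫ s in (2-1:ℝ)..(q-1), (fun _ => α * (1 - Real.exp (x (q-1)))) s := by
    apply h.diff_le_int _ continuous_const (by linarith)
    intro s hs
    have h21 : (2:ℝ)-1 = 1 := by norm_num
    rw [h21] at hs
    have hxs : x (q-1) ≤ x s :=
      h.down ⟨hs.1, by linarith [hs.2]⟩ ⟨by linarith, by linarith⟩ hs.2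
    have := Real.exp_le_exp.mpr hxs
    nlinarith [h.hα0]
  rw [intervalIntegral.integral_const, h.xq] at key
  simp only [smul_eq_mul] at key
  have he : x (q-1) + 1 < Real.exp (x (q-1)) := Real.add_one_lt_exp (ne_of_gt hc)
  have hfin : (q-2) * α < 1 := by nlinarith
  have : q - 2 < 1/α := by rw [lt_div_iff₀ h0]; linarith
  linarith

/-- strict version with ≤ on Ioc and strictness at some point -/
lemma diff_lt_int' {a b : ℝ} (g : ℝ → ℝ) (hg : Continuous g) (hab : a < b)
    (hle : ∀ s ∈ Ioc (a-1) (b-1), α * (1 - Real.exp (x s)) ≤ g s)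
    (hex : ∃ c ∈ Icc (a-1) (b-1), α * (1 - Real.exp (x c)) < g c) :
    x b - x a < ∫ s in (a-1)..(b-1), g s := by
  rw [h.ftc a b]
  exact intervalIntegral.integral_lt_integral_of_continuousOn_of_le_of_exists_lt
    (by linarith) h.contG.continuousOn hg.continuousOn hle hex

/-- x u > α u on (-1,0) -/
lemma x_gt_lin : ∀ u ∈ Ioo (-1:ℝ) 0, α * u < x u := by
  intro u hu
  have key : x 0 - x u < ∫ s in (u-1)..(0-1:ℝ), (fun _ => α) s := by
    apply h.diff_lt_int _ continuous_const (by linarith [hu.2])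
    intro s _
    nlinarith [Real.exp_pos (x s), h.hα0]
  rw [intervalIntegral.integral_const, h.hx0] at key
  simp only [smul_eq_mul] at key
  nlinarith

/-- M < α - 1 + exp (-α) -/
lemma M_lt : x 1 < α - 1 + Real.exp (-α) := by
  have h0 := h.hα0
  have key : x 1 - x 0 < ∫ s in (0-1:ℝ)..(1-1:ℝ), (fun u => α * (1 - Real.exp (α * u))) s := by
    apply h.diff_lt_int' _ (by continuity) one_pos
    · intro s hs
      have h1 : (0:ℝ)-1 = -1 := by norm_num
      have h2 : (1:ℝ)-1 = 0 := by norm_num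
      rw [h1, h2] at hs
      rcases eq_or_lt_of_le hs.2 with he | hlt
      · rw [he, h.hx0]; simp
      · have := h.x_gt_lin s ⟨hs.1, hlt⟩
        have := Real.exp_le_exp.mpr (le_of_lt this)
        nlinarith
    · refine ⟨-1/2, ⟨by norm_num, by norm_num⟩, ?_⟩
      have h3 : (-1/2 : ℝ) ∈ Ioo (-1:ℝ) 0 := by norm_num
      have := h.x_gt_lin _ h3
      have := Real.exp_lt_exp.mpr this
      nlinarith
  rw [h.hx0] at key
  have hint : (∫ s in (0-1:ℝ)..(1-1:ℝ), (fun u => α * (1 - Real.exp (α * u))) s)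
      = α - 1 + Real.exp (-α) := by
    have hd : ∀ u : ℝ, HasDerivAt (fun v => α * v - Real.exp (α * v))
        (α * (1 - Real.exp (α * u))) u := by
      intro u
      have h1 : HasDerivAt (fun v => α * v) α u := by
        simpa using (hasDerivAt_id u).const_mul α
      have h2 : HasDerivAt (fun v => Real.exp (α * v)) (Real.exp (α * u) * α) u :=
        (Real.hasDerivAt_exp (α*u)).comp u h1
      have := h1.sub h2
      rw [show α * (1 - Real.exp (α * u)) = α - Real.exp (α * u) * α by ring]
      exact this
    have := intervalIntegral.integral_eq_sub_of_hasDerivAt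
      (f := fun v => α * v - Real.exp (α * v)) (a := (0:ℝ)-1) (b := (1:ℝ)-1)
      (fun t _ => hd t) (Continuous.intervalIntegrable (by continuity) _ _)
    rw [this]
    simp only [show (0:ℝ)-1 = -1 by norm_num, show (1:ℝ)-1 = 0 by norm_num]
    rw [mul_zero, mul_neg_one, Real.exp_zero]
    ring
  rw [hint] at key
  linarith

/-- Part B : q > 1 + (1/α) M*/(e^{M*}-1) -/
lemma q_gt : 1 + (1/α) * ((α + Real.exp (-α) - 1) / (Real.exp (α + Real.exp (-α) - 1) - 1)) < q := by
  have h0 := h.hα0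
  have hM : 0 < x 1 := h.M_pos
  set N := α - 1 + Real.exp (-α) with hNdef
  have hMN : x 1 < N := h.M_lt
  have hNpos : 0 < N := by
    have := Real.exp_pos (-α); have := h.hα; simp only [hNdef]; linarith
  have key : (∫ s in (1-1:ℝ)..(q-1), (fun _ => α * (1 - Real.exp (x 1))) s) ≤ x q - x 1 := by
    apply h.diff_ge_int _ continuous_const (le_of_lt h.hq)
    intro s hs
    have h2 : (1:ℝ)-1 = 0 := by norm_num
    rw [h2] at hs
    have hxs : x s ≤ x 1 := h.xmax s ⟨hs.1, by linarith [hs.2, h.hq]⟩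
    have := Real.exp_le_exp.mpr hxs
    nlinarith
  rw [intervalIntegral.integral_const, h.xq] at key
  simp only [smul_eq_mul] at key
  have hlen : (q - 1 - ((1:ℝ)-1)) = q - 1 := by ring
  rw [hlen] at key
  -- key : (q-1) * (α * (1 - exp (x 1))) ≤ 0 - x 1
  have hdM : 0 < Real.exp (x 1) - 1 := by
    have := Real.add_one_lt_exp (ne_of_gt hM); linarith
  have hdN : 0 < Real.exp N - 1 := by
    have := Real.add_one_lt_exp (ne_of_gt hNpos); linarith
  have hstep : x 1 ≤ (q-1) * (α * (Real.exp (x 1) - 1)) := by nlinarith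
  have hratio : N * (Real.exp (x 1) - 1) < x 1 * (Real.exp N - 1) := exp_ratio hM hMN
  -- conclude : (1/α) * (N / (exp N - 1)) < q - 1
  have hc1 : N / (Real.exp N - 1) < x 1 / (Real.exp (x 1) - 1) := by
    rw [div_lt_div_iff₀ hdN hdM]
    nlinarith
  have hc2 : x 1 / (Real.exp (x 1) - 1) ≤ (q-1) * α := by
    rw [div_le_iff₀ hdM]
    nlinarith
  have hgoal : (1/α) * (N / (Real.exp N - 1)) < q - 1 := by
    have hp : 0 < N / (Real.exp N - 1) := div_pos hNpos hdN
    calc (1/α) * (N / (Real.exp N - 1)) < (1/α) * (x 1 / (Real.exp (x 1) - 1)) := by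
          apply mul_lt_mul_of_pos_left hc1 (by positivity)
      _ ≤ (1/α) * ((q-1) * α) := mul_le_mul_of_nonneg_left hc2 (by positivity)
      _ = q - 1 := by field_simp
  have hre : α + Real.exp (-α) - 1 = N := by rw [hNdef]; ring
  rw [hre]
  linarith

lemma c_ineq (h3 : 3 ≤ qbar) :
    x (q+qbar-1) ≤ α * (Real.exp (x (q+qbar-1)) - 1) := by
  have key : (∫ s in (q+qbar-1-1)..(q+qbar-1), (fun _ => α * (1 - Real.exp (x (q+qbar-1)))) s)
      ≤ x (q+qbar) - x (q+qbar-1) := by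
    apply h.diff_ge_int _ continuous_const (by linarith)
    intro s hs
    have hxs : x s ≤ x (q+qbar-1) :=
      h.up2 ⟨by linarith [hs.1], by linarith [hs.2]⟩ ⟨by linarith, by linarith⟩ hs.2
    have := Real.exp_le_exp.mpr hxs
    nlinarith [h.hα0]
  rw [intervalIntegral.integral_const, h.xL] at key
  simp only [smul_eq_mul] at key
  have hlen : (q + qbar - 1 - (q+qbar-1-1)) = 1 := by ring
  rw [hlen, one_mul] at key
  linarith

lemma c_le_aJones (h3 : 3 ≤ qbar) : ∀ i, x (q+qbar-1) ≤ aJones α i := by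
  have hc : x (q+qbar-1) < 0 := h.c_neg
  have hmain := h.c_ineq h3
  set c := x (q+qbar-1) with hcdef
  have h1c : 0 < 1 - c := by linarith
  have hec : Real.exp c * (1 - c) ≤ 1 := by
    have := Real.add_one_le_exp (-c)
    rw [Real.exp_neg] at this
    have hE := Real.exp_pos c
    have h4 : Real.exp c * (-c + 1) ≤ Real.exp c * (Real.exp c)⁻¹ :=
      mul_le_mul_of_nonneg_left this (le_of_lt hE)
    rw [mul_inv_cancel₀ (ne_of_gt hE)] at h4
    nlinarith
  intro i
  induction i with
  | zero =>
    simp only [aJones]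
    have ha1 : α * (Real.exp c - 1) * (1 - c) ≤ α * c := by
      nlinarith [mul_le_mul_of_nonneg_left hec (le_of_lt h.hα0)]
    have ha2 : c * (1 - c) ≤ α * c := by
      nlinarith [mul_le_mul_of_nonneg_right hmain (le_of_lt h1c)]
    nlinarith [h.hα]
  | succ n ih =>
    simp only [aJones]
    have := Real.exp_le_exp.mpr ih
    nlinarith [h.hα0]

lemma m_ge : α * (1 - Real.exp (x 1)) ≤ x (q+1) := by
  have key : (∫ s in (q-1)..(q+1-1), (fun _ => α * (1 - Real.exp (x 1))) s)
      ≤ x (q+1) - x q := by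
    apply h.diff_ge_int _ continuous_const (by linarith)
    intro s hs
    have hxs : x s ≤ x 1 := h.xmax s ⟨by linarith [hs.1, h.hq], by linarith [hs.2]⟩
    have := Real.exp_le_exp.mpr hxs
    nlinarith [h.hα0]
  rw [intervalIntegral.integral_const, h.xq] at key
  simp only [smul_eq_mul] at key
  have hlen : (q + 1 - 1 - (q-1)) = 1 := by ring
  rw [hlen, one_mul] at key
  linarith

/-- Part D : qbar < max 3 (2 + |(e^α-1)/(e^{a_i}-1)|) -/
lemma qbar_lt (i : ℕ) :
    qbar < max 3 (2 + |(Real.exp α - 1) / (Real.exp (aJones α i) - 1)|) := by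
  rcases lt_or_ge qbar 3 with h3 | h3
  · exact lt_of_lt_of_le h3 (le_max_left _ _)
  have h0 := h.hα0
  have hai : aJones α i < 0 := aJones_neg h.hα i
  have hcai := h.c_le_aJones h3 i
  have hdai : 0 < 1 - Real.exp (aJones α i) := by
    have := Real.exp_lt_one_iff.mpr hai; linarith
  have hcc : x (q+qbar-1) < 0 := h.c_neg
  -- -x(q+2) ≥ (qbar-2) α (1 - e^c)
  have key : (∫ s in (q+2-1)..(q+qbar-1), (fun _ => α * (1 - Real.exp (x (q+qbar-1)))) s)
      ≤ x (q+qbar) - x (q+2) := by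
    apply h.diff_ge_int _ continuous_const (by linarith)
    intro s hs
    have hxs : x s ≤ x (q+qbar-1) :=
      h.up2 ⟨by linarith [hs.1], by linarith [hs.2]⟩ ⟨by linarith, by linarith⟩ hs.2
    have := Real.exp_le_exp.mpr hxs
    nlinarith
  rw [intervalIntegral.integral_const, h.xL] at key
  simp only [smul_eq_mul] at key
  have hlen : (q + qbar - 1 - (q+2-1)) = qbar - 2 := by ring
  rw [hlen] at key
  -- x(q+2) ≥ m
  have hx2m : x (q+1) ≤ x (q+2) :=
    h.up2 ⟨le_refl _, by linarith⟩ ⟨by linarith, by linarith⟩ (by linarith)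
  -- -m < α (e^α - 1)
  have hmge := h.m_ge
  have hMα : x 1 < α := by
    have := h.M_lt
    have h5 : Real.exp (-α) < 1 := Real.exp_lt_one_iff.mpr (by linarith)
    linarith
  have hmgt : α * (1 - Real.exp α) < x (q+1) := by
    have := Real.exp_lt_exp.mpr hMα
    nlinarith
  -- chain
  have hchain : (qbar - 2) * (α * (1 - Real.exp (aJones α i))) < α * (Real.exp α - 1) := by
    have hce : Real.exp (x (q+qbar-1)) ≤ Real.exp (aJones α i) := Real.exp_le_exp.mpr hcai
    have hq2 : 0 ≤ qbar - 2 := by linarith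
    nlinarith [key, hx2m, hmgt,
      mul_le_mul_of_nonneg_left hce (le_of_lt h0)]
  have hfin : qbar - 2 < (Real.exp α - 1) / (1 - Real.exp (aJones α i)) := by
    rw [lt_div_iff₀ hdai]
    have hd2 : 0 < α * (1 - Real.exp (aJones α i)) := mul_pos h0 hdai
    nlinarith [hchain]
  have habs : |(Real.exp α - 1) / (Real.exp (aJones α i) - 1)|
      = (Real.exp α - 1) / (1 - Real.exp (aJones α i)) := by
    rw [abs_div]
    have h6 : (0:ℝ) < Real.exp α - 1 := by
      have := Real.add_one_lt_exp (ne_of_gt h0); linarith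
    rw [abs_of_pos h6, abs_of_neg (by linarith : Real.exp (aJones α i) - 1 < 0)]
    ring_nf
  refine lt_of_lt_of_le ?_ (le_max_right _ _)
  rw [habs]
  linarith

set_option maxHeartbeats 2000000 in
/-- Part E : α ≥ 2 → q < 2 -/
lemma q_lt_two (h2 : 2 ≤ α) : q < 2 := by
  by_contra hcon
  push_neg at hcon  -- hcon : 2 ≤ q
  have h0 := h.hα0
  have hM : 0 < x 1 := h.M_pos
  have hx2 : 0 ≤ x 2 := by
    rcases eq_or_lt_of_le hcon with he | hlt
    · rw [he, h.xq]
    · exact le_of_lt (h.hpos 2 ⟨by norm_num, hlt⟩)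
  -- strict upper bound : α ∫_0^1 x < M
  have hkey : x 2 - x 1 < ∫ s in (1-1:ℝ)..(2-1:ℝ), (fun u => α * (-(x u))) s := by
    apply h.diff_lt_int (fun u => α * (-(x u))) (continuous_const.mul h.cont.neg) one_lt_two
    intro s hs
    rw [show (1:ℝ)-1 = 0 by norm_num, show (2:ℝ)-1 = 1 by norm_num] at hs
    have hxs : 0 < x s := h.hpos s ⟨hs.1, by linarith [hs.2, h.hq]⟩
    have := Real.add_one_lt_exp (ne_of_gt hxs)
    nlinarith
  rw [show (1:ℝ)-1 = 0 by norm_num, show (2:ℝ)-1 = 1 by norm_num] at hkey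
  have hrw : (∫ s in (0:ℝ)..1, (fun u => α * (-(x u))) s) = -(α * ∫ s in (0:ℝ)..1, x s) := by
    simp only []
    rw [intervalIntegral.integral_const_mul]
    rw [intervalIntegral.integral_neg]
    ring
  rw [hrw] at hkey
  have hub : α * (∫ s in (0:ℝ)..1, x s) < x 1 := by linarith
  -- now show M ≤ α ∫_0^1 x, by cases on qbar
  have hxint : IntervalIntegrable x MeasureTheory.volume 0 1 := h.cont.intervalIntegrable 0 1
  rcases le_or_gt 2 qbar with hβ | hβ
  · -- qbar ≥ 2 : x concave on [0,1], x s ≥ s M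
    have hconc : ConcaveOn ℝ (Icc (0:ℝ) 1) x := by
      apply AntitoneOn.concaveOn_of_deriv (convex_Icc 0 1) h.cont.continuousOn
        (fun t _ => (h.diff t).differentiableWithinAt)
      rw [interior_Icc]
      intro s1 hs1 s2 hs2 h12
      rw [h.deriv_eq s1, h.deriv_eq s2]
      have e1 : x (s1 - 1) = x (s1 - 1 + (q+qbar)) := (h.hper (s1-1)).symm
      have e2 : x (s2 - 1) = x (s2 - 1 + (q+qbar)) := (h.hper (s2-1)).symm
      have hmono : x (s1 - 1 + (q+qbar)) ≤ x (s2 - 1 + (q+qbar)) := by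
        apply h.up2 ⟨by linarith [hs1.1, hβ], by linarith [hs1.2]⟩
          ⟨by linarith [hs2.1, hβ], by linarith [hs2.2]⟩ (by linarith)
      have : Real.exp (x (s1-1)) ≤ Real.exp (x (s2-1)) := by
        rw [e1, e2]; exact Real.exp_le_exp.mpr hmono
      nlinarith
    have hchord : ∀ s ∈ Icc (0:ℝ) 1, s * x 1 ≤ x s := by
      intro s hs
      have := hconc.2 (⟨le_refl 0, by norm_num⟩ : (0:ℝ) ∈ Icc (0:ℝ) 1)
        (⟨by norm_num, le_refl 1⟩ : (1:ℝ) ∈ Icc (0:ℝ) 1)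
        (by linarith [hs.2] : (0:ℝ) ≤ 1 - s) (hs.1) (by ring)
      simp only [smul_eq_mul, mul_zero, mul_one, zero_add, h.hx0] at this
      linarith [this]
    have hI : (∫ s in (0:ℝ)..1, s * x 1) ≤ ∫ s in (0:ℝ)..1, x s := by
      apply intervalIntegral.integral_mono_on (by norm_num)
        (Continuous.intervalIntegrable (by continuity) _ _) hxint hchord
    rw [intervalIntegral.integral_mul_const, integral_id] at hI
    nlinarith [hI, hub]
  · -- 1 < qbar < 2
    obtain ⟨c2, hc2def⟩ : ∃ c2 : ℝ, c2 = 2 - qbar := ⟨_, rfl⟩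
    have hc20 : 0 < c2 := by simp only [hc2def]; linarith
    have hc21 : c2 < 1 := by simp only [hc2def]; linarith [h.hqb]
    have hcL : x (q+qbar-1) < 0 := h.c_neg
    obtain ⟨σ, hσdef⟩ : ∃ σ : ℝ, σ = α * (1 - Real.exp (x (q+qbar-1))) := ⟨_, rfl⟩
    have hσ0 : 0 < σ := by
      have : Real.exp (x (q+qbar-1)) < 1 := Real.exp_lt_one_iff.mpr hcL
      simp only [hσdef]; nlinarith
    -- E1 : x (q+qbar-1) is a lower bound on [L-2, L-1]
    have hE1 : ∀ v ∈ Icc (q+qbar-2) (q+qbar-1), x (q+qbar-1) ≤ x v := by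
      intro v hv
      apply h.down ⟨by linarith [hv.1, hcon, h.hqb], by linarith [hv.2, hβ]⟩
        ⟨by linarith [hcon, h.hqb], by linarith [hβ]⟩ hv.2
    -- E2 : tangent bound on [-1, 0] : x u ≥ σ u
    have hE2 : ∀ u ∈ Icc (-1:ℝ) 0, σ * u ≤ x u := by
      intro u hu
      have key : x 0 - x u ≤ ∫ s in (u-1)..(0-1:ℝ), (fun _ => σ) s := by
        apply h.diff_le_int _ continuous_const (by linarith [hu.2])
        intro s hs
        have hper := h.hper s
        have hv : x (q+qbar-1) ≤ x (s + (q+qbar)) := by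
          apply hE1 _ ⟨by linarith [hs.1, hu.1], by linarith [hs.2]⟩
        rw [hper] at hv
        have := Real.exp_le_exp.mpr hv
        simp only [hσdef]
        nlinarith
      rw [intervalIntegral.integral_const, h.hx0] at key
      simp only [smul_eq_mul] at key
      nlinarith [key]
    -- E3 : M ≤ α σ / 2
    have hE3 : x 1 ≤ α * σ / 2 := by
      have key : x 1 - x 0 ≤ ∫ s in (0-1:ℝ)..(1-1:ℝ), (fun u => (α * σ) * (-u)) s := by
        apply h.diff_le_int _ (by continuity) (by norm_num)
        intro s hs
        rw [show (0:ℝ)-1 = -1 by norm_num, show (1:ℝ)-1 = 0 by norm_num] at hs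
        have h5 := hE2 s hs
        have h6 := Real.add_one_le_exp (x s)
        nlinarith
      rw [h.hx0] at key
      have hint : (∫ s in (0-1:ℝ)..(1-1:ℝ), (fun u => (α * σ) * (-u)) s) = α * σ / 2 := by
        simp only []
        rw [intervalIntegral.integral_const_mul, intervalIntegral.integral_neg, integral_id]
        ring_nf
      rw [hint] at key
      linarith
    -- E4 : x s ≥ σ s on [0, c2]
    have hE4 : ∀ s ∈ Icc (0:ℝ) c2, σ * s ≤ x s := by
      intro s hs
      have key : (∫ v in (0-1:ℝ)..(s-1), (fun _ => σ) v) ≤ x s - x 0 := by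
        apply h.diff_ge_int _ continuous_const hs.1
        intro v hv
        rw [show (0:ℝ)-1 = -1 by norm_num] at hv
        have hper := h.hper v
        have hvmem : x (v + (q+qbar)) ≤ x (q+qbar-1) := by
          apply h.down ⟨by linarith [hcon, h.hqb], by linarith [hβ]⟩
            ⟨by linarith [hv.1, hcon, h.hqb], by linarith [hv.2, hs.2]⟩ (by linarith [hv.1])
        rw [hper] at hvmem
        have := Real.exp_le_exp.mpr hvmem
        simp only [hσdef]
        nlinarith
      rw [intervalIntegral.integral_const, h.hx0] at key
      simp only [smul_eq_mul] at key
      nlinarith [key]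
    -- E5 : concavity on [c2, 1]
    have hconc : ConcaveOn ℝ (Icc c2 1) x := by
      apply AntitoneOn.concaveOn_of_deriv (convex_Icc c2 1) h.cont.continuousOn
        (fun t _ => (h.diff t).differentiableWithinAt)
      rw [interior_Icc]
      intro s1 hs1 s2 hs2 h12
      rw [h.deriv_eq s1, h.deriv_eq s2]
      have e1 : x (s1 - 1) = x (s1 - 1 + (q+qbar)) := (h.hper (s1-1)).symm
      have e2 : x (s2 - 1) = x (s2 - 1 + (q+qbar)) := (h.hper (s2-1)).symm
      have hmono : x (s1 - 1 + (q+qbar)) ≤ x (s2 - 1 + (q+qbar)) := by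
        apply h.up2 ⟨by simp only [hc2def] at hs1; linarith [hs1.1], by linarith [hs1.2]⟩
          ⟨by simp only [hc2def] at hs2; linarith [hs2.1], by linarith [hs2.2]⟩ (by linarith)
      have : Real.exp (x (s1-1)) ≤ Real.exp (x (s2-1)) := by
        rw [e1, e2]; exact Real.exp_le_exp.mpr hmono
      nlinarith
    -- E6 : chord bound on [c2, 1]
    have hβ0 : 0 < 1 - c2 := by linarith
    have hE6 : ∀ s ∈ Icc c2 1,
        ((1-s) * (σ * c2) + (s - c2) * x 1) / (1 - c2) ≤ x s := by
      intro s hs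
      have ha : (0:ℝ) ≤ (1-s)/(1-c2) := div_nonneg (by linarith [hs.2]) (le_of_lt hβ0)
      have hb : (0:ℝ) ≤ (s-c2)/(1-c2) := div_nonneg (by linarith [hs.1]) (le_of_lt hβ0)
      have hab : (1-s)/(1-c2) + (s-c2)/(1-c2) = 1 := by field_simp; ring
      have hco := hconc.2 (⟨le_refl c2, le_of_lt hc21⟩ : c2 ∈ Icc c2 1)
        (⟨le_of_lt hc21, le_refl 1⟩ : (1:ℝ) ∈ Icc c2 1) ha hb hab
      simp only [smul_eq_mul, mul_one] at hco
      have hpt : (1-s)/(1-c2) * c2 + (s-c2)/(1-c2) = s := by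
        field_simp; ring
      rw [hpt] at hco
      have hxc2 : σ * c2 ≤ x c2 := hE4 c2 ⟨le_of_lt hc20, le_refl c2⟩
      have h7 : (1-s)/(1-c2) * (σ * c2) + (s-c2)/(1-c2) * x 1 ≤ x s := by
        calc (1-s)/(1-c2) * (σ * c2) + (s-c2)/(1-c2) * x 1
            ≤ (1-s)/(1-c2) * x c2 + (s-c2)/(1-c2) * x 1 := by
              apply add_le_add_left (mul_le_mul_of_nonneg_left hxc2 ha)
          _ ≤ x s := hco
      calc ((1-s) * (σ * c2) + (s - c2) * x 1) / (1 - c2)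
          = (1-s)/(1-c2) * (σ * c2) + (s-c2)/(1-c2) * x 1 := by ring
        _ ≤ x s := h7
    -- E7 : integral bounds
    have hI1 : σ * c2^2 / 2 ≤ ∫ s in (0:ℝ)..c2, x s := by
      have := intervalIntegral.integral_mono_on (μ := MeasureTheory.volume) (le_of_lt hc20)
        (Continuous.intervalIntegrable (u := fun s => σ * s) (continuous_const.mul continuous_id') _ _)
        (h.cont.intervalIntegrable 0 c2) hE4
      rw [intervalIntegral.integral_const_mul, integral_id] at this
      nlinarith [this]
    have hI2 : ((σ * c2) + x 1) * (1 - c2) / 2 ≤ ∫ s in c2..(1:ℝ), x s := by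
      have hcont2 : Continuous (fun s : ℝ => ((1-s) * (σ * c2) + (s - c2) * x 1) / (1 - c2)) :=
        Continuous.div_const
          (((continuous_const.sub continuous_id).mul continuous_const).add
            ((continuous_id.sub continuous_const).mul continuous_const)) _
      have := intervalIntegral.integral_mono_on (μ := MeasureTheory.volume) (le_of_lt hc21)
        (hcont2.intervalIntegrable _ _) (h.cont.intervalIntegrable c2 1) hE6
      have hcomp : (∫ s in c2..(1:ℝ), ((1-s) * (σ * c2) + (s - c2) * x 1) / (1 - c2))
          = ((σ * c2) + x 1) * (1 - c2) / 2 := by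
        have hre : ∀ s : ℝ, ((1-s) * (σ * c2) + (s - c2) * x 1) / (1 - c2)
            = ((σ * c2) - c2 * x 1) / (1-c2)
              + ((x 1 - σ * c2) / (1-c2)) * s := by
          intro s; field_simp; ring
        rw [intervalIntegral.integral_congr (fun s _ => hre s)]
        rw [intervalIntegral.integral_add
          (Continuous.intervalIntegrable (μ := MeasureTheory.volume) continuous_const _ _)
          (Continuous.intervalIntegrable (μ := MeasureTheory.volume) (u := fun s => (x 1 - σ * c2) / (1-c2) * s)
            (continuous_const.mul continuous_id') _ _)]
        rw [intervalIntegral.integral_const_mul, integral_id, intervalIntegral.integral_const]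
        simp only [smul_eq_mul]
        field_simp
        ring
      rw [hcomp] at this
      exact this
    have hI3 : (∫ s in (0:ℝ)..c2, x s) + (∫ s in c2..(1:ℝ), x s) = ∫ s in (0:ℝ)..1, x s :=
      intervalIntegral.integral_add_adjacent_intervals
        (h.cont.intervalIntegrable 0 c2) (h.cont.intervalIntegrable c2 1)
    -- E8 : conclude
    have hfinal : x 1 ≤ α * ∫ s in (0:ℝ)..1, x s := by
      rw [← hI3]
      have hστ : 2 * x 1 ≤ α * σ := by linarith [hE3]
      have hA := mul_le_mul_of_nonneg_left hI1 (le_of_lt h0)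
      have hB := mul_le_mul_of_nonneg_left hI2 (le_of_lt h0)
      have hC := mul_le_mul_of_nonneg_right hστ (le_of_lt hc20)
      have hD := mul_le_mul_of_nonneg_right h2
        (mul_nonneg (le_of_lt hM) (by linarith : (0:ℝ) ≤ 1 - c2))
      nlinarith [hA, hB, hC, hD]
    linarith

end WCore

theorem q_qbar_bounds (α q qbar : ℝ) (x : ℝ → ℝ) (hα : Real.pi / 2 ≤ α)
    (hx : SOPSX α q qbar x) :
    (1 + (1 / α) * ((α + Real.exp (-α) - 1) / (Real.exp (α + Real.exp (-α) - 1) - 1)) < q ∧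
      q < 2 + 1 / α) ∧
    (1 + 1 / α < qbar ∧
      ∀ i : ℕ, qbar < max 3 (2 + |(Real.exp α - 1) / (Real.exp (aJones α i) - 1)|)) ∧
    (2 ≤ α → q < 2) := by
  obtain ⟨hInX, hW, hq, hqb, hpos, hneg, hper, hmin⟩ := hx
  have hα1 : 1 < α := by linarith [Real.pi_gt_three]
  have core : WCore α q qbar x := ⟨hα1, hW, hq, hqb, hInX.2.1, hpos, hneg, hper⟩
  exact ⟨⟨core.q_gt, core.q_lt⟩, ⟨core.qbar_gt, core.qbar_lt⟩, core.q_lt_two⟩
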